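/- arXiv:2209.10281 — 2 statements merged into one kernel-verified Lean document; each statement's English description precedes it below -/
import Mathlib

section
/- If $v$ is a $C^2$ function on a domain $\Omega \subset \mathbb{R}^2$ satisfying the modified Helmholtz equation $\nabla^2 v = \mu^2 v$ with $\mu \neq 0$, then for every closed disc $\overline{D_r(x)} \subset \Omega$ one has $\frac{1}{2\pi r}\int_{S_r(x)} v(y)\, dS_y = I_0(\mu r)\, v(x)$, where $I_0$ is the modified Bessel function of the first kind of order $0$ and $S_r(x)$ is the circle of radius $r$ centered at $x$. -/
open MeasureTheory Real intervalIntegral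

/-- Modified Bessel function of the first kind, order 0. -/
noncomputable def besselI0 (t : ℝ) : ℝ :=
  (1 / π) * ∫ θ in (0:ℝ)..π, Real.cosh (t * Real.cos θ)

/-- Modified Bessel function of the first kind, order 1. -/
noncomputable def besselI1 (t : ℝ) : ℝ :=
  (1 / π) * ∫ θ in (0:ℝ)..π, Real.cosh (t * Real.cos θ) * Real.cos θ

/-- Bessel function of the first kind, order 0. -/
noncomputable def besselJ0 (t : ℝ) : ℝ :=
  (1 / π) * ∫ θ in (0:ℝ)..π, Real.cos (t * Real.sin θ)

/-- The Euclidean plane. -/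
abbrev E2 := EuclideanSpace ℝ (Fin 2)

/-- The Laplacian of a function on the plane, as a sum of second partial derivatives. -/
noncomputable def lap (f : E2 → ℝ) (y : E2) : ℝ :=
  ∑ i : Fin 2,
    fderiv ℝ (fun z => fderiv ℝ f z (EuclideanSpace.single i 1)) y (EuclideanSpace.single i 1)

/-- The point on the circle of radius `r` about `x` at angle `θ`. -/
noncomputable def circlePt (x : E2) (r θ : ℝ) : E2 :=
  x + (r * Real.cos θ) • EuclideanSpace.single 0 1 + (r * Real.sin θ) • EuclideanSpace.single 1 1

/-! ### Auxiliary material -/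

open Set

section duis

/-- Differentiation under the integral sign, continuous-data version. -/
lemma duis_helper {a b : ℝ} {S : Set ℝ} (hS : IsOpen S)
    {H H' : ℝ → ℝ → ℝ}
    (hH : ∀ s ∈ S, Continuous (fun θ => H s θ))
    (hH'c : ContinuousOn (fun p : ℝ × ℝ => H' p.1 p.2) (S ×ˢ (univ : Set ℝ)))
    (hd : ∀ s ∈ S, ∀ θ : ℝ, HasDerivAt (fun s => H s θ) (H' s θ) s)
    {s₀ : ℝ} (hs₀ : s₀ ∈ S) :
    HasDerivAt (fun s => ∫ θ in a..b, H s θ) (∫ θ in a..b, H' s₀ θ) s₀ := by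
  obtain ⟨δ, hδ, hδS⟩ : ∃ δ > 0, Metric.closedBall s₀ δ ⊆ S := by
    obtain ⟨ε, hε, h⟩ := Metric.isOpen_iff.1 hS s₀ hs₀
    exact ⟨ε/2, by positivity, (Metric.closedBall_subset_ball (by linarith)).trans h⟩
  have hK : IsCompact ((Metric.closedBall s₀ δ) ×ˢ (uIcc a b)) :=
    (isCompact_closedBall _ _).prod isCompact_uIcc
  obtain ⟨C, hC⟩ : ∃ C, ∀ p ∈ (Metric.closedBall s₀ δ) ×ˢ (uIcc a b), ‖H' p.1 p.2‖ ≤ C :=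
    hK.exists_bound_of_continuousOn (hH'c.mono (by
      intro p hp; exact ⟨hδS hp.1, mem_univ _⟩))
  have key := hasDerivAt_integral_of_dominated_loc_of_deriv_le (F := H) (F' := H')
    (μ := volume) (a := a) (b := b) (x₀ := s₀) (bound := fun _ => C) (Metric.ball_mem_nhds s₀ hδ)
    (Filter.eventually_of_mem (Metric.ball_mem_nhds s₀ hδ) (fun x hx =>
      ((hH x (hδS (Metric.ball_subset_closedBall hx))).aestronglyMeasurable)))
    ((hH s₀ hs₀).intervalIntegrable a b)
    (Continuous.aestronglyMeasurable (by
      have hc : Continuous (fun θ : ℝ => (s₀, θ)) := by fun_prop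
      exact hH'c.comp_continuous hc (fun θ => ⟨hs₀, mem_univ _⟩)))
    (Filter.Eventually.of_forall (fun θ hθ x hx =>
      hC (x, θ) ⟨Metric.ball_subset_closedBall hx, uIoc_subset_uIcc hθ⟩))
    (intervalIntegrable_const)
    (Filter.Eventually.of_forall (fun θ _ x hx =>
      hd x (hδS (Metric.ball_subset_closedBall hx)) θ))
  exact key.2

end duis

section bessel

/-- First derivative integrand of `besselI0`. -/
noncomputable def I0d (t : ℝ) : ℝ :=
  (1 / π) * ∫ θ in (0:ℝ)..π, Real.sinh (t * Real.cos θ) * Real.cos θ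

/-- Second derivative integrand of `besselI0`. -/
noncomputable def I0dd (t : ℝ) : ℝ :=
  (1 / π) * ∫ θ in (0:ℝ)..π, Real.cosh (t * Real.cos θ) * Real.cos θ ^ 2

lemma hasDerivAt_besselI0 (t : ℝ) : HasDerivAt besselI0 (I0d t) t := by
  have h := duis_helper (a := 0) (b := π) isOpen_univ
    (H := fun t θ => Real.cosh (t * Real.cos θ))
    (H' := fun t θ => Real.sinh (t * Real.cos θ) * Real.cos θ)
    (fun s _ => by fun_prop) (by fun_prop)
    (fun s _ θ => (hasDerivAt_mul_const (x := s) (Real.cos θ)).cosh)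
    (mem_univ t)
  exact (h.const_mul (1/π))

lemma hasDerivAt_I0d (t : ℝ) : HasDerivAt I0d (I0dd t) t := by
  have h := duis_helper (a := 0) (b := π) isOpen_univ
    (H := fun t θ => Real.sinh (t * Real.cos θ) * Real.cos θ)
    (H' := fun t θ => Real.cosh (t * Real.cos θ) * Real.cos θ ^ 2)
    (fun s _ => by fun_prop) (by fun_prop)
    (fun s _ θ => by
      have h := ((hasDerivAt_mul_const (x := s) (Real.cos θ)).sinh).mul_const (Real.cos θ)
      refine h.congr_deriv ?_; ring)
    (mem_univ t)
  exact (h.const_mul (1/π))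

lemma besselI0_ode (t : ℝ) : t * I0dd t + I0d t = t * besselI0 t := by
  have hftc : ∫ θ in (0:ℝ)..π,
      (t * (Real.cosh (t * Real.cos θ) * Real.cos θ ^ 2) + Real.sinh (t * Real.cos θ) * Real.cos θ
        - t * Real.cosh (t * Real.cos θ)) = 0 := by
    have hderiv : ∀ θ ∈ uIcc (0:ℝ) π, HasDerivAt (fun θ => Real.sinh (t * Real.cos θ) * Real.sin θ)
        (t * (Real.cosh (t * Real.cos θ) * Real.cos θ ^ 2) + Real.sinh (t * Real.cos θ) * Real.cos θ
          - t * Real.cosh (t * Real.cos θ)) θ := by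
      intro θ _
      have h := ((Real.hasDerivAt_sinh (t * Real.cos θ)).comp θ
        ((Real.hasDerivAt_cos θ).const_mul t)).mul (Real.hasDerivAt_sin θ)
      refine h.congr_deriv ?_; symm
      simp only [Function.comp_apply]
      have hs := Real.sin_sq_add_cos_sq θ
      linear_combination (t * Real.cosh (t * Real.cos θ)) * hs
    have := intervalIntegral.integral_eq_sub_of_hasDerivAt hderiv
      (Continuous.intervalIntegrable (by fun_prop) _ _)
    simpa using this
  have hi1 : IntervalIntegrable (fun θ => Real.cosh (t * Real.cos θ) * Real.cos θ ^ 2) volume 0 π := by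
    apply Continuous.intervalIntegrable; fun_prop
  have hi2 : IntervalIntegrable (fun θ => Real.sinh (t * Real.cos θ) * Real.cos θ) volume 0 π := by
    apply Continuous.intervalIntegrable; fun_prop
  have hi3 : IntervalIntegrable (fun θ => Real.cosh (t * Real.cos θ)) volume 0 π := by
    apply Continuous.intervalIntegrable; fun_prop
  rw [intervalIntegral.integral_sub ((hi1.const_mul t).add hi2) (hi3.const_mul t),
    intervalIntegral.integral_add (hi1.const_mul t) hi2,
    intervalIntegral.integral_const_mul, intervalIntegral.integral_const_mul] at hftc
  have hπ : (π:ℝ) ≠ 0 := Real.pi_ne_zero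
  unfold besselI0 I0d I0dd
  field_simp
  simp only [mul_comm (Real.cos _ ^ 2), mul_comm (Real.cos _) (Real.sinh _)]
  linarith [hftc]

lemma besselI0_zero : besselI0 0 = 1 := by
  unfold besselI0
  simp [Real.pi_ne_zero]

lemma I0d_zero : I0d 0 = 0 := by
  unfold I0d
  simp

lemma one_le_besselI0 (t : ℝ) : 1 ≤ besselI0 t := by
  have h : (∫ θ in (0:ℝ)..π, (1:ℝ)) ≤ ∫ θ in (0:ℝ)..π, Real.cosh (t * Real.cos θ) := by
    apply intervalIntegral.integral_mono_on Real.pi_pos.le intervalIntegrable_const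
      (by apply Continuous.intervalIntegrable; fun_prop)
    exact fun θ _ => Real.one_le_cosh _
  simp only [intervalIntegral.integral_const, smul_eq_mul, mul_one, sub_zero] at h
  unfold besselI0
  calc (1:ℝ) = (1/π) * π := by field_simp
  _ ≤ _ := by
      apply mul_le_mul_of_nonneg_left _ (by positivity)
      linarith [h]

end bessel

section geometry

/-- Unit radial vector. -/
noncomputable def uvec (θ : ℝ) : E2 :=
  (Real.cos θ) • EuclideanSpace.single 0 1 + (Real.sin θ) • EuclideanSpace.single 1 1

/-- Unit tangential vector. -/
noncomputable def wvec (θ : ℝ) : E2 :=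
  (-Real.sin θ) • EuclideanSpace.single 0 1 + (Real.cos θ) • EuclideanSpace.single 1 1

lemma circlePt_eq (x : E2) (s θ : ℝ) : circlePt x s θ = x + s • uvec θ := by
  simp [circlePt, uvec, smul_add, smul_smul, add_assoc]

lemma norm_uvec (θ : ℝ) : ‖uvec θ‖ = 1 := by
  rw [EuclideanSpace.norm_eq]
  simp only [uvec]
  simp [EuclideanSpace.single_apply, Fin.sum_univ_two, Real.norm_eq_abs, sq_abs,
    Real.cos_sq_add_sin_sq]

lemma dist_circlePt (x : E2) (s θ : ℝ) : dist (circlePt x s θ) x = |s| := by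
  rw [circlePt_eq, dist_eq_norm]
  simp [norm_smul, norm_uvec, abs_of_nonneg]

lemma continuous_circlePt (x : E2) : Continuous (fun q : ℝ × ℝ => circlePt x q.1 q.2) := by
  unfold circlePt; fun_prop

lemma continuous_circlePt_theta (x : E2) (s : ℝ) : Continuous (fun θ => circlePt x s θ) := by
  unfold circlePt; fun_prop

lemma continuous_uvec : Continuous uvec := by unfold uvec; fun_prop
lemma continuous_wvec : Continuous wvec := by unfold wvec; fun_prop

lemma hasDerivAt_circlePt_s (x : E2) (θ s : ℝ) :
    HasDerivAt (fun s => circlePt x s θ) (uvec θ) s := by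
  simp only [circlePt_eq]
  simpa using ((hasDerivAt_id s).smul_const (uvec θ)).const_add x

lemma hasDerivAt_circlePt_theta (x : E2) (s θ : ℝ) :
    HasDerivAt (fun θ => circlePt x s θ) (s • wvec θ) θ := by
  simp only [circlePt]
  have h0 : HasDerivAt (fun θ : ℝ => (s * Real.cos θ) • (EuclideanSpace.single 0 1 : E2))
      ((s * -Real.sin θ) • EuclideanSpace.single 0 1) θ :=
    (((Real.hasDerivAt_cos θ).const_mul s).smul_const _)
  have h1 : HasDerivAt (fun θ : ℝ => (s * Real.sin θ) • (EuclideanSpace.single 1 1 : E2))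
      ((s * Real.cos θ) • EuclideanSpace.single 1 1) θ :=
    (((Real.hasDerivAt_sin θ).const_mul s).smul_const _)
  have := (h0.const_add x).add h1
  refine this.congr_deriv ?_
  simp [wvec, smul_add, smul_smul, add_assoc, mul_comm, mul_neg]

lemma hasDerivAt_smul_wvec (s θ : ℝ) :
    HasDerivAt (fun θ => s • wvec θ) (s • (-uvec θ)) θ := by
  simp only [wvec]
  have h0 : HasDerivAt (fun θ : ℝ => (-Real.sin θ) • (EuclideanSpace.single 0 1 : E2))
      ((-Real.cos θ) • EuclideanSpace.single 0 1) θ :=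
    ((Real.hasDerivAt_sin θ).neg.smul_const _)
  have h1 : HasDerivAt (fun θ : ℝ => (Real.cos θ) • (EuclideanSpace.single 1 1 : E2))
      ((-Real.sin θ) • EuclideanSpace.single 1 1) θ :=
    ((Real.hasDerivAt_cos θ).smul_const _)
  have := (h0.add h1).const_smul s
  have hval : s • (-uvec θ) = s • ((-Real.cos θ) • (EuclideanSpace.single 0 1 : E2) +
      (-Real.sin θ) • EuclideanSpace.single 1 1) := by
    simp only [uvec]; module
  rw [hval]
  exact this

lemma bilin_trace (B : E2 →L[ℝ] E2 →L[ℝ] ℝ) (θ : ℝ) :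
    B (uvec θ) (uvec θ) + B (wvec θ) (wvec θ) =
      B (EuclideanSpace.single 0 1) (EuclideanSpace.single 0 1) +
      B (EuclideanSpace.single 1 1) (EuclideanSpace.single 1 1) := by
  have hs := Real.sin_sq_add_cos_sq θ
  simp only [uvec, wvec, map_add, ContinuousLinearMap.map_smul, ContinuousLinearMap.add_apply,
    ContinuousLinearMap.smul_apply, _root_.map_smul, smul_eq_mul]
  linear_combination ((B (EuclideanSpace.single 0 1)) (EuclideanSpace.single 0 1) +
    (B (EuclideanSpace.single 1 1)) (EuclideanSpace.single 1 1)) * hs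

lemma circlePt_two_pi (x : E2) (s : ℝ) : circlePt x s (2*π) = circlePt x s 0 := by
  simp [circlePt]

lemma wvec_two_pi : wvec (2*π) = wvec 0 := by simp [wvec]

lemma fderiv_apply_comm {f1 : E2 → (E2 →L[ℝ] ℝ)} {y : E2} (h : DifferentiableAt ℝ f1 y)
    (c d : E2) : fderiv ℝ (fun z => f1 z c) y d = fderiv ℝ f1 y d c := by
  rw [(h.hasFDerivAt.clm_apply (hasFDerivAt_const c y)).fderiv]
  simp

end geometry

theorem circle_mean_value_panharmonic
    (Ω : Set E2) (hΩo : IsOpen Ω) (hΩc : IsConnected Ω)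
    (v : E2 → ℝ) (hv : ContDiffOn ℝ 2 v Ω)
    (μ : ℝ) (hμ : μ ≠ 0)
    (hpan : ∀ y ∈ Ω, lap v y = μ ^ 2 * v y)
    (x : E2) (r : ℝ) (hr : 0 < r) (hball : Metric.closedBall x r ⊆ Ω) :
    (1 / (2 * π)) * ∫ θ in (0:ℝ)..(2 * π), v (circlePt x r θ) =
      besselI0 (μ * r) * v x := by
  classical
  -- enlarge the radius slightly
  obtain ⟨ε, hε, hout⟩ := (isCompact_closedBall x r).exists_cthickening_subset_open hΩo hball
  rw [cthickening_closedBall hε.le hr.le] at hout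
  obtain ⟨R, hRdef⟩ : ∃ R : ℝ, R = ε + r := ⟨_, rfl⟩
  rw [← hRdef] at hout
  have hrR : r < R := by rw [hRdef]; linarith
  have hR0 : 0 < R := by rw [hRdef]; linarith
  obtain ⟨S, hSdef⟩ : ∃ S : Set ℝ, S = Ioo (-R) R := ⟨_, rfl⟩
  have hSopen : IsOpen S := hSdef ▸ isOpen_Ioo
  have hmem : ∀ s ∈ S, ∀ θ : ℝ, circlePt x s θ ∈ Ω := by
    intro s hs θ
    apply hout
    rw [Metric.mem_closedBall, dist_circlePt]
    rw [hSdef] at hs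
    obtain ⟨h1, h2⟩ := hs
    rw [abs_le]; constructor <;> linarith
  have hrS : r ∈ S := hSdef ▸ ⟨by linarith, hrR⟩
  have hIccS : Icc (0:ℝ) r ⊆ S := fun s hs =>
    hSdef ▸ ⟨by have := hs.1; linarith, lt_of_le_of_lt hs.2 hrR⟩
  -- derivative data for v
  have hv1 : ContDiffOn ℝ 1 (fderiv ℝ v) Ω := hv.fderiv_of_isOpen hΩo (by norm_num)
  have hdv : ∀ y ∈ Ω, DifferentiableAt ℝ v y := fun y hy =>
    (hv.contDiffAt (hΩo.mem_nhds hy)).differentiableAt (by norm_num)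
  have hdf1 : ∀ y ∈ Ω, DifferentiableAt ℝ (fderiv ℝ v) y := fun y hy =>
    (hv1.contDiffAt (hΩo.mem_nhds hy)).differentiableAt one_ne_zero
  have hcv : ContinuousOn v Ω := hv.continuousOn
  have hcf1 : ContinuousOn (fderiv ℝ v) Ω := hv1.continuousOn
  have hcf2 : ContinuousOn (fderiv ℝ (fderiv ℝ v)) Ω := hv1.continuousOn_fderiv_of_isOpen hΩo le_rfl
  -- Laplacian as trace of second derivative
  have hlap : ∀ y ∈ Ω, fderiv ℝ (fderiv ℝ v) y (EuclideanSpace.single 0 1) (EuclideanSpace.single 0 1)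
      + fderiv ℝ (fderiv ℝ v) y (EuclideanSpace.single 1 1) (EuclideanSpace.single 1 1)
      = μ ^ 2 * v y := by
    intro y hy
    have h := hpan y hy
    rw [lap, Fin.sum_univ_two] at h
    rw [← fderiv_apply_comm (hdf1 y hy), ← fderiv_apply_comm (hdf1 y hy)]
    exact h
  -- continuity package
  have hpcont : ∀ s : ℝ, Continuous (fun θ => circlePt x s θ) := continuous_circlePt_theta x
  have hmaps : Set.MapsTo (fun q : ℝ × ℝ => circlePt x q.1 q.2) (S ×ˢ (univ : Set ℝ)) Ω :=
    fun q hq => hmem q.1 hq.1 q.2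
  have hjc : ContinuousOn (fun q : ℝ × ℝ => circlePt x q.1 q.2) (S ×ˢ (univ : Set ℝ)) :=
    (continuous_circlePt x).continuousOn
  have hc1 : ContinuousOn (fun q : ℝ × ℝ => fderiv ℝ v (circlePt x q.1 q.2) (uvec q.2))
      (S ×ˢ (univ : Set ℝ)) :=
    ContinuousOn.clm_apply (hcf1.comp hjc hmaps)
      ((continuous_uvec.comp continuous_snd).continuousOn)
  have hc2 : ContinuousOn
      (fun q : ℝ × ℝ => fderiv ℝ (fderiv ℝ v) (circlePt x q.1 q.2) (uvec q.2) (uvec q.2))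
      (S ×ˢ (univ : Set ℝ)) :=
    ContinuousOn.clm_apply (ContinuousOn.clm_apply (hcf2.comp hjc hmaps)
      ((continuous_uvec.comp continuous_snd).continuousOn))
      ((continuous_uvec.comp continuous_snd).continuousOn)
  have hcont_f2uu : ∀ s ∈ S, Continuous (fun θ =>
      fderiv ℝ (fderiv ℝ v) (circlePt x s θ) (uvec θ) (uvec θ)) := fun s hs =>
    ((hcf2.comp_continuous (hpcont s) (fun θ => hmem s hs θ)).clm_apply
      continuous_uvec).clm_apply continuous_uvec
  have hcont_f1u : ∀ s ∈ S, Continuous (fun θ => fderiv ℝ v (circlePt x s θ) (uvec θ)) :=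
    fun s hs => (hcf1.comp_continuous (hpcont s) (fun θ => hmem s hs θ)).clm_apply continuous_uvec
  have hcont_v : ∀ s ∈ S, Continuous (fun θ => v (circlePt x s θ)) :=
    fun s hs => hcv.comp_continuous (hpcont s) (fun θ => hmem s hs θ)
  -- the three radial functions
  obtain ⟨G, hGdef⟩ : ∃ G : ℝ → ℝ, G = fun s => ∫ θ in (0:ℝ)..(2*π), v (circlePt x s θ) := ⟨_, rfl⟩
  obtain ⟨G1, hG1def⟩ : ∃ G1 : ℝ → ℝ,
      G1 = fun s => ∫ θ in (0:ℝ)..(2*π), fderiv ℝ v (circlePt x s θ) (uvec θ) := ⟨_, rfl⟩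
  obtain ⟨G2, hG2def⟩ : ∃ G2 : ℝ → ℝ,
      G2 = fun s => ∫ θ in (0:ℝ)..(2*π),
        fderiv ℝ (fderiv ℝ v) (circlePt x s θ) (uvec θ) (uvec θ) := ⟨_, rfl⟩
  have hG' : ∀ s ∈ S, HasDerivAt G (G1 s) s := by
    intro s hs
    simp only [hGdef, hG1def]
    exact duis_helper hSopen
      (fun s hs => hcont_v s hs)
      hc1
      (fun s hs θ =>
        ((hdv _ (hmem s hs θ)).hasFDerivAt.comp_hasDerivAt s (hasDerivAt_circlePt_s x θ s)))
      hs
  have hG1' : ∀ s ∈ S, HasDerivAt G1 (G2 s) s := by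
    intro s hs
    simp only [hG1def, hG2def]
    refine duis_helper (H := fun s θ => fderiv ℝ v (circlePt x s θ) (uvec θ))
      (H' := fun s θ => fderiv ℝ (fderiv ℝ v) (circlePt x s θ) (uvec θ) (uvec θ)) hSopen
      (fun s hs => hcont_f1u s hs) hc2 ?_ hs
    intro s hs θ
    have hf1p : HasDerivAt (fun s => fderiv ℝ v (circlePt x s θ))
        (fderiv ℝ (fderiv ℝ v) (circlePt x s θ) (uvec θ)) s :=
      (hdf1 _ (hmem s hs θ)).hasFDerivAt.comp_hasDerivAt s (hasDerivAt_circlePt_s x θ s)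
    have h := hf1p.clm_apply (hasDerivAt_const s (uvec θ))
    simpa using h
  -- G1 0 = 0
  have hcp0 : ∀ θ : ℝ, circlePt x 0 θ = x := fun θ => by simp [circlePt]
  have hG10 : G1 0 = 0 := by
    have he : G1 0 = ∫ θ in (0:ℝ)..(2*π),
        (Real.cos θ * fderiv ℝ v x (EuclideanSpace.single 0 1)
          + Real.sin θ * fderiv ℝ v x (EuclideanSpace.single 1 1)) := by
      simp only [hG1def]
      refine intervalIntegral.integral_congr (fun θ _ => ?_)
      simp only [hcp0, uvec, map_add, _root_.map_smul, smul_eq_mul]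
    rw [he, intervalIntegral.integral_add
        (Continuous.intervalIntegrable (by fun_prop) _ _)
        (Continuous.intervalIntegrable (by fun_prop) _ _),
      intervalIntegral.integral_mul_const, intervalIntegral.integral_mul_const,
      integral_cos, integral_sin]
    simp [Real.sin_two_pi, Real.cos_two_pi]
  -- the ODE for G
  have hODE : ∀ s ∈ S, s * G2 s + G1 s = μ ^ 2 * (s * G s) := by
    intro s hs
    rcases eq_or_ne s 0 with rfl | hsne
    · simpa using hG10
    · -- tangential second derivative and FTC
      have hTder : ∀ θ : ℝ, HasDerivAt (fun θ => fderiv ℝ v (circlePt x s θ) (s • wvec θ))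
          (fderiv ℝ (fderiv ℝ v) (circlePt x s θ) (s • wvec θ) (s • wvec θ)
            + fderiv ℝ v (circlePt x s θ) (s • (-uvec θ))) θ := by
        intro θ
        have hc : HasDerivAt (fun θ => fderiv ℝ v (circlePt x s θ))
            (fderiv ℝ (fderiv ℝ v) (circlePt x s θ) (s • wvec θ)) θ :=
          (hdf1 _ (hmem s hs θ)).hasFDerivAt.comp_hasDerivAt θ (hasDerivAt_circlePt_theta x s θ)
        exact hc.clm_apply (hasDerivAt_smul_wvec s θ)
      have hTcont : Continuous (fun θ : ℝ =>
          fderiv ℝ (fderiv ℝ v) (circlePt x s θ) (s • wvec θ) (s • wvec θ)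
            + fderiv ℝ v (circlePt x s θ) (s • (-uvec θ))) := by
        have hf2c : Continuous (fun θ => fderiv ℝ (fderiv ℝ v) (circlePt x s θ)) :=
          hcf2.comp_continuous (hpcont s) (fun θ => hmem s hs θ)
        have hf1c : Continuous (fun θ => fderiv ℝ v (circlePt x s θ)) :=
          hcf1.comp_continuous (hpcont s) (fun θ => hmem s hs θ)
        have hw : Continuous (fun θ : ℝ => s • wvec θ) := continuous_wvec.const_smul s
        have hu : Continuous (fun θ : ℝ => s • (-uvec θ)) := (continuous_uvec.neg).const_smul s
        exact ((hf2c.clm_apply hw).clm_apply hw).add (hf1c.clm_apply hu)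
      have hftc : ∫ θ in (0:ℝ)..(2*π),
          (fderiv ℝ (fderiv ℝ v) (circlePt x s θ) (s • wvec θ) (s • wvec θ)
            + fderiv ℝ v (circlePt x s θ) (s • (-uvec θ))) = 0 := by
        rw [intervalIntegral.integral_eq_sub_of_hasDerivAt (fun θ _ => hTder θ)
          (hTcont.intervalIntegrable _ _)]
        rw [circlePt_two_pi, wvec_two_pi]
        ring
      -- pointwise polar identity (multiplied through by s)
      have hptwise : ∀ θ : ℝ,
          s * (s * fderiv ℝ (fderiv ℝ v) (circlePt x s θ) (uvec θ) (uvec θ)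
            + fderiv ℝ v (circlePt x s θ) (uvec θ))
          = (μ ^ 2 * s * s) * v (circlePt x s θ)
            - (fderiv ℝ (fderiv ℝ v) (circlePt x s θ) (s • wvec θ) (s • wvec θ)
              + fderiv ℝ v (circlePt x s θ) (s • (-uvec θ))) := by
        intro θ
        have hl := hlap _ (hmem s hs θ)
        have hb := bilin_trace (fderiv ℝ (fderiv ℝ v) (circlePt x s θ)) θ
        have hsm1 : fderiv ℝ (fderiv ℝ v) (circlePt x s θ) (s • wvec θ) (s • wvec θ)
            = s ^ 2 * fderiv ℝ (fderiv ℝ v) (circlePt x s θ) (wvec θ) (wvec θ) := by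
          rw [(fderiv ℝ (fderiv ℝ v) (circlePt x s θ)).map_smul,
            ContinuousLinearMap.smul_apply,
            (fderiv ℝ (fderiv ℝ v) (circlePt x s θ) (wvec θ)).map_smul]
          simp only [smul_eq_mul]
          ring
        have hsm2 : fderiv ℝ v (circlePt x s θ) (s • (-uvec θ))
            = -(s * fderiv ℝ v (circlePt x s θ) (uvec θ)) := by
          rw [(fderiv ℝ v (circlePt x s θ)).map_smul]
          simp only [map_neg, smul_eq_mul, mul_neg]
        rw [hsm1, hsm2]
        linear_combination (s^2) * hb + (s^2) * hl
      -- integrate the identity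
      have hInt : ∫ θ in (0:ℝ)..(2*π),
          (s * (s * fderiv ℝ (fderiv ℝ v) (circlePt x s θ) (uvec θ) (uvec θ)
            + fderiv ℝ v (circlePt x s θ) (uvec θ)))
          = ∫ θ in (0:ℝ)..(2*π),
          ((μ ^ 2 * s * s) * v (circlePt x s θ)
            - (fderiv ℝ (fderiv ℝ v) (circlePt x s θ) (s • wvec θ) (s • wvec θ)
              + fderiv ℝ v (circlePt x s θ) (s • (-uvec θ)))) :=
        intervalIntegral.integral_congr (fun θ _ => hptwise θ)
      rw [intervalIntegral.integral_const_mul] at hInt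
      rw [intervalIntegral.integral_add
          (((hcont_f2uu s hs).intervalIntegrable _ _).const_mul s)
          ((hcont_f1u s hs).intervalIntegrable _ _),
        intervalIntegral.integral_const_mul] at hInt
      rw [intervalIntegral.integral_sub (((hcont_v s hs).intervalIntegrable _ _).const_mul _)
          (hTcont.intervalIntegrable _ _),
        intervalIntegral.integral_const_mul, hftc] at hInt
      apply mul_left_cancel₀ hsne
      simp only [hGdef, hG1def, hG2def]
      rw [hInt]
      ring
  -- Bessel side
  obtain ⟨J, hJdef⟩ : ∃ J : ℝ → ℝ, J = fun s => besselI0 (μ * s) := ⟨_, rfl⟩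
  obtain ⟨J1, hJ1def⟩ : ∃ J1 : ℝ → ℝ, J1 = fun s => μ * I0d (μ * s) := ⟨_, rfl⟩
  obtain ⟨J2, hJ2def⟩ : ∃ J2 : ℝ → ℝ, J2 = fun s => μ ^ 2 * I0dd (μ * s) := ⟨_, rfl⟩
  have hJ' : ∀ s : ℝ, HasDerivAt J (J1 s) s := by
    intro s
    have h := (hasDerivAt_besselI0 (μ * s)).comp s ((hasDerivAt_id s).const_mul μ)
    simp only [hJdef, hJ1def]
    refine h.congr_deriv ?_
    ring
  have hJ1' : ∀ s : ℝ, HasDerivAt J1 (J2 s) s := by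
    intro s
    have h := (((hasDerivAt_I0d (μ * s)).comp s ((hasDerivAt_id s).const_mul μ)).const_mul μ)
    simp only [hJ1def, hJ2def]
    refine h.congr_deriv ?_
    ring
  have hJODE : ∀ s : ℝ, s * J2 s + J1 s = μ ^ 2 * (s * J s) := by
    intro s
    have h := besselI0_ode (μ * s)
    simp only [hJdef, hJ1def, hJ2def]
    linear_combination μ * h
  have hJpos : ∀ s : ℝ, 0 < J s := fun s =>
    lt_of_lt_of_le one_pos (hJdef ▸ one_le_besselI0 (μ * s))
  -- Wronskian vanishes
  obtain ⟨φ, hφdef⟩ : ∃ φ : ℝ → ℝ, φ = fun s => s * (G1 s * J s - G s * J1 s) := ⟨_, rfl⟩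
  have hφ' : ∀ s ∈ S, HasDerivAt φ 0 s := by
    intro s hs
    have hd : HasDerivAt φ
        (1 * (G1 s * J s - G s * J1 s)
          + s * ((G2 s * J s + G1 s * J1 s) - (G1 s * J1 s + G s * J2 s))) s := by
      simp only [hφdef]
      exact (hasDerivAt_id s).mul (((hG1' s hs).mul (hJ' s)).sub ((hG' s hs).mul (hJ1' s)))
    have h1 := hODE s hs
    have h2 := hJODE s
    convert hd using 1
    linear_combination (G s) * h2 - (J s) * h1
  have hφ0 : ∀ s ∈ Icc (0:ℝ) r, φ s = 0 := by
    have hconst := constant_of_has_deriv_right_zero (f := φ) (a := 0) (b := r)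
      (fun s hs => ((hφ' s (hIccS hs)).continuousAt.continuousWithinAt))
      (fun s hs => ((hφ' s (hIccS (Ico_subset_Icc_self hs))).hasDerivWithinAt))
    intro s hs
    have h := hconst s hs
    rw [h, hφdef]
    simp
  -- quotient is constant
  obtain ⟨ψ, hψdef⟩ : ∃ ψ : ℝ → ℝ, ψ = fun s => G s / J s := ⟨_, rfl⟩
  have hψd : ∀ s ∈ Icc (0:ℝ) r, HasDerivAt ψ
      ((G1 s * J s - G s * J1 s) / (J s) ^ 2) s := by
    intro s hs
    simp only [hψdef]
    exact (hG' s (hIccS hs)).div (hJ' s) (hJpos s).ne'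
  have hψ' : ∀ s ∈ Ico (0:ℝ) r, HasDerivWithinAt ψ 0 (Ici s) s := by
    intro s hs
    have hnum : G1 s * J s - G s * J1 s = 0 := by
      rcases eq_or_ne s 0 with rfl | hsne
      · rw [hG10, hJ1def]
        simp [I0d_zero]
      · have h := hφ0 s ⟨hs.1, hs.2.le⟩
        rw [hφdef] at h
        simp only [] at h
        rcases mul_eq_zero.1 h with h' | h'
        · exact absurd h' hsne
        · exact h'
    have hdd := hψd s ⟨hs.1, hs.2.le⟩
    rw [hnum] at hdd
    simpa using hdd.hasDerivWithinAt
  have hψconst := constant_of_has_deriv_right_zero (f := ψ) (a := 0) (b := r)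
    (fun s hs => (hψd s hs).continuousAt.continuousWithinAt) hψ'
  have hfin := hψconst r (right_mem_Icc.2 hr.le)
  -- endpoint values
  have hG0 : G 0 = 2 * π * v x := by
    have he : G 0 = ∫ θ in (0:ℝ)..(2*π), v x := by
      simp only [hGdef]
      exact intervalIntegral.integral_congr (fun θ _ => by rw [hcp0])
    rw [he, intervalIntegral.integral_const]
    simp [smul_eq_mul]
  have hJ0 : J 0 = 1 := by
    simp only [hJdef]
    simp [besselI0_zero]
  simp only [hψdef] at hfin
  rw [hG0, hJ0] at hfin
  -- conclude
  have hGr : G r = J r * (2 * π * v x) := by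
    rw [div_one] at hfin
    field_simp [(hJpos r).ne'] at hfin
    linarith [hfin]
  have hπ : (π : ℝ) ≠ 0 := Real.pi_ne_zero
  simp only [hGdef, hJdef] at hGr
  rw [hGr]
  field_simp
end

section
/- Let $\Omega \subset \mathbb{R}^2$ be a bounded domain with $|\Omega| \geq \pi r^2$ for some $r > 0$, and let $x_0 \in \Omega$. If the identity $\frac{1}{2} = \frac{1}{|\Omega|}\int_\Omega \log\frac{r}{|x_0 - y|}\, dy$ holds, and moreover $\frac{1}{2} = \frac{1}{\pi r^2}\int_{D_r(x_0)} \log\frac{r}{|x_0-y|}\, dy$, then $\Omega = D_r(x_0)$ up to a set of measure zero; more precisely, the open sets $\Omega \setminus \overline{D_r(x_0)}$ and $D_r(x_0) \setminus \overline{\Omega}$ are both empty. -/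
open MeasureTheory Real intervalIntegral

open Metric Set in
private lemma integrableOn_log_norm_ball (x₀ : E2) (R : ℝ) :
    IntegrableOn (fun y => Real.log ‖x₀ - y‖) (Metric.ball x₀ R) := by
  have hmeas : Measurable fun y : E2 => Real.log ‖x₀ - y‖ :=
    Real.measurable_log.comp (continuous_const.sub continuous_id).norm.measurable
  have h1 : IntegrableOn (fun y => Real.log ‖x₀ - y‖) (Metric.ball x₀ 1) := by
    refine ⟨hmeas.aestronglyMeasurable.restrict, ?_⟩
    rw [hasFiniteIntegral_iff_norm]
    have hcong : ∫⁻ y in ball x₀ 1, ENNReal.ofReal ‖Real.log ‖x₀ - y‖‖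
        = ∫⁻ y in ball x₀ 1, ENNReal.ofReal (-(Real.log ‖x₀ - y‖)) := by
      refine setLIntegral_congr_fun measurableSet_ball (fun y hy => ?_)
      have ht : ‖x₀ - y‖ < 1 := by
        rw [← dist_eq_norm, dist_comm]; exact mem_ball.mp hy
      have : Real.log ‖x₀ - y‖ ≤ 0 := Real.log_nonpos (norm_nonneg _) ht.le
      rw [Real.norm_eq_abs, abs_of_nonpos this]
    rw [hcong, lintegral_eq_lintegral_meas_le (f := fun y => -Real.log ‖x₀ - y‖) _
      (by
        refine (ae_restrict_iff' measurableSet_ball).2 (ae_of_all _ fun y hy => ?_)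
        have ht : ‖x₀ - y‖ < 1 := by
          rw [← dist_eq_norm, dist_comm]; exact mem_ball.mp hy
        simpa using Real.log_nonpos (norm_nonneg _) ht.le)
      hmeas.neg.aemeasurable]
    have hbound : ∫⁻ t in Ioi (0:ℝ), (volume.restrict (ball x₀ 1)) {y : E2 | t ≤ -Real.log ‖x₀ - y‖}
        ≤ ∫⁻ t in Ioi (0:ℝ), ENNReal.ofReal (Real.exp (-t) ^ 2) * volume (ball (0:E2) 1) := by
      refine lintegral_mono fun t => ?_
      calc (volume.restrict (ball x₀ 1)) {y : E2 | t ≤ -Real.log ‖x₀ - y‖}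
          ≤ volume {y : E2 | t ≤ -Real.log ‖x₀ - y‖} := Measure.restrict_le_self _
        _ ≤ volume (closedBall x₀ (Real.exp (-t))) := by
            refine measure_mono fun y hy => ?_
            have hy' : Real.log ‖x₀ - y‖ ≤ -t := by linarith [mem_setOf.mp hy]
            have : ‖x₀ - y‖ ≤ Real.exp (-t) := by
              rcases (norm_nonneg (x₀ - y)).eq_or_lt with h | h
              · rw [← h]; exact (Real.exp_pos _).le
              · exact ((Real.log_le_iff_le_exp h).mp hy')
            rw [mem_closedBall, dist_comm, dist_eq_norm]
            exact this
        _ = ENNReal.ofReal (Real.exp (-t) ^ 2) * volume (ball (0:E2) 1) := by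
            rw [Measure.addHaar_closedBall _ _ (Real.exp_pos _).le]
            norm_num
    refine lt_of_le_of_lt hbound ?_
    rw [lintegral_mul_const _
      (show Measurable fun t : ℝ => ENNReal.ofReal (Real.exp (-t) ^ 2) from
        (((Real.continuous_exp.comp continuous_neg).pow 2).measurable).ennreal_ofReal)]
    have : ∀ t : ℝ, Real.exp (-t) ^ 2 = Real.exp (-2*t) := fun t => by
      rw [sq, ← Real.exp_add]; ring_nf
    simp_rw [this]
    exact ENNReal.mul_lt_top (exp_neg_integrableOn_Ioi 0 (by norm_num : (0:ℝ) < 2)).lintegral_lt_top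
      measure_ball_lt_top
  have h2 : IntegrableOn (fun y => Real.log ‖x₀ - y‖) (closedBall x₀ R \ ball x₀ 1) := by
    refine ContinuousOn.integrableOn_compact ((isCompact_closedBall _ _).diff isOpen_ball) ?_
    refine ContinuousOn.log ((continuous_const.sub continuous_id).norm.continuousOn) ?_
    intro y hy
    have : (1:ℝ) ≤ dist y x₀ := by
      by_contra h
      exact hy.2 (mem_ball.mpr (lt_of_not_ge h))
    rw [dist_comm, dist_eq_norm] at this
    positivity
  refine (h1.union h2).mono_set fun y hy => ?_
  by_cases h : y ∈ ball x₀ 1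
  · exact Or.inl h
  · exact Or.inr ⟨ball_subset_closedBall hy, h⟩

theorem inverse_weighted_mean_harmonic
    (Ω : Set E2) (hΩo : IsOpen Ω) (hΩc : IsConnected Ω)
    (hΩb : Bornology.IsBounded Ω)
    (r : ℝ) (hr : 0 < r) (harea : π * r ^ 2 ≤ (volume Ω).toReal)
    (x₀ : E2) (hx₀ : x₀ ∈ Ω)
    (h1 : (1 : ℝ) / 2 = (1 / (volume Ω).toReal) * ∫ y in Ω, Real.log (r / ‖x₀ - y‖))
    (h2 : (1 : ℝ) / 2 = (1 / (π * r ^ 2)) * ∫ y in Metric.ball x₀ r, Real.log (r / ‖x₀ - y‖)) :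
    Ω \ closure (Metric.ball x₀ r) = ∅ ∧ Metric.ball x₀ r \ closure Ω = ∅ := by
  set f : E2 → ℝ := fun y => Real.log (r / ‖x₀ - y‖) with hf
  set D : Set E2 := Metric.ball x₀ r with hD
  have hπ : (0:ℝ) < π * r ^ 2 := by positivity
  have ha : (0:ℝ) < (volume Ω).toReal := lt_of_lt_of_le hπ harea
  have hnorm : ∀ y : E2, ‖x₀ - y‖ = dist y x₀ := fun y => by
    rw [dist_comm, dist_eq_norm]
  -- integrability of f on balls
  have key : ∀ R : ℝ, IntegrableOn f (Metric.ball x₀ R) := by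
    intro R
    have h0 : IntegrableOn (fun y => Real.log r - Real.log ‖x₀ - y‖) (Metric.ball x₀ R) :=
      (integrableOn_const measure_ball_lt_top.ne).sub (integrableOn_log_norm_ball x₀ R)
    refine h0.congr ?_
    refine ae_restrict_of_ae ?_
    rw [ae_iff]
    refine measure_mono_null (fun y hy => ?_) (measure_singleton x₀)
    simp only [Set.mem_setOf_eq] at hy
    rw [Set.mem_singleton_iff]
    by_contra hyx
    have hne : ‖x₀ - y‖ ≠ 0 := by
      simp only [norm_ne_zero_iff, sub_ne_zero]
      exact fun h => hyx h.symm
    exact hy (Real.log_div hr.ne' hne).symm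
  obtain ⟨R, hrR, hΩR⟩ := hΩb.subset_ball_lt r x₀
  have hfiΩ : IntegrableOn f Ω := (key R).mono_set hΩR
  have hfiD : IntegrableOn f D := (key R).mono_set (Metric.ball_subset_ball hrR.le)
  -- values of the two integrals
  have hI1 : ∫ y in Ω, f y = (volume Ω).toReal / 2 := by
    field_simp at h1; linarith
  have hI2 : ∫ y in D, f y = (π * r ^ 2) / 2 := by
    field_simp at h2; linarith
  -- splitting
  have hΩm : MeasurableSet Ω := hΩo.measurableSet
  have e1 : (∫ y in Ω ∩ D, f y) + ∫ y in Ω \ D, f y = ∫ y in Ω, f y :=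
    integral_inter_add_diff measurableSet_ball hfiΩ
  have e2 : (∫ y in D ∩ Ω, f y) + ∫ y in D \ Ω, f y = ∫ y in D, f y :=
    integral_inter_add_diff hΩm hfiD
  rw [Set.inter_comm D Ω] at e2
  set A := ∫ y in Ω \ D, f y with hA
  set B := ∫ y in D \ Ω, f y with hB
  -- sign facts
  have hApt : ∀ y ∈ Ω \ D, f y ≤ 0 := by
    intro y hy
    have hge : r ≤ ‖x₀ - y‖ := by
      rw [hnorm]
      exact le_of_not_gt fun h => hy.2 (Metric.mem_ball.mpr h)
    have hpos : (0:ℝ) < ‖x₀ - y‖ := lt_of_lt_of_le hr hge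
    exact Real.log_nonpos (by positivity) ((div_le_one hpos).mpr hge)
  have hBpt : ∀ y ∈ D \ Ω, 0 ≤ f y := by
    intro y hy
    rcases (norm_nonneg (x₀ - y)).eq_or_lt with h | h
    · simp [hf, ← h]
    · have hlt : ‖x₀ - y‖ < r := by rw [hnorm]; exact Metric.mem_ball.mp hy.1
      exact Real.log_nonneg ((one_le_div h).mpr hlt.le)
  have hA0 : A ≤ 0 := setIntegral_nonpos (hΩm.diff measurableSet_ball) hApt
  have hB0 : 0 ≤ B := setIntegral_nonneg (measurableSet_ball.diff hΩm) hBpt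
  have hAB : A - B = ((volume Ω).toReal - π * r ^ 2) / 2 := by
    rw [hI1] at e1; rw [hI2] at e2; linarith
  have hAeq : A = 0 := le_antisymm hA0 (by linarith)
  have hBeq : B = 0 := le_antisymm (by linarith) hB0
  have hfm : Measurable f := by
    apply Real.measurable_log.comp
    exact measurable_const.div (continuous_const.sub continuous_id).norm.measurable
  have hclos : closure D = Metric.closedBall x₀ r := closure_ball x₀ hr.ne'
  -- a.e. vanishing on a set forces open subsets where f ≠ 0 to be empty
  have empty_of : ∀ (g : E2 → ℝ) (s U : Set E2), Measurable g → IntegrableOn g s volume →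
      MeasurableSet s → IsOpen U → U ⊆ s →
      (∀ y ∈ U, g y ≠ 0) → (∫ y in s, g y = 0) → (∀ y ∈ s, 0 ≤ g y) → U = ∅ := by
    intro g s U hgm hgi hsm hUo hUs hUne hint hsgn
    by_contra hne
    rw [← Ne, ← Set.nonempty_iff_ne_empty] at hne
    have hUpos : 0 < volume U := hUo.measure_pos volume hne
    have hzero : g =ᵐ[volume.restrict s] 0 :=
      (setIntegral_eq_zero_iff_of_nonneg_ae
        ((ae_restrict_iff' hsm).2 (ae_of_all _ hsgn)) hgi).mp hint
    have hzero' : ∀ᵐ y ∂(volume.restrict s), g y = 0 := hzero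
    have h' := ae_iff.mp hzero'
    rw [Measure.restrict_apply (by exact (hgm (measurableSet_singleton (0:ℝ))).compl)] at h'
    have hU0 : volume U = 0 :=
      measure_mono_null (fun y hy => Set.mem_inter (hUne y hy) (hUs hy)) h'
    exact absurd hU0 hUpos.ne'
  constructor
  · refine empty_of (fun y => -f y) (Ω \ D) _ hfm.neg (hfiΩ.mono_set Set.diff_subset).neg
      (hΩm.diff measurableSet_ball) (hΩo.sdiff isClosed_closure)
      (fun y hy => ⟨hy.1, fun h => hy.2 (subset_closure h)⟩) ?_ ?_
      (fun y hy => neg_nonneg.mpr (hApt y hy))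
    · intro y hy
      have hgt : r < ‖x₀ - y‖ := by
        rw [hnorm]
        have := hy.2
        rw [hclos] at this
        exact lt_of_not_ge fun h => this (Metric.mem_closedBall.mpr h)
      have ht : (0:ℝ) < ‖x₀ - y‖ := hr.trans hgt
      have : f y < 0 := Real.log_neg (div_pos hr ht) ((div_lt_one ht).mpr hgt)
      simpa using this.ne
    · rw [MeasureTheory.integral_neg, ← hA, hAeq, neg_zero]
  · refine empty_of f (D \ Ω) _ hfm (hfiD.mono_set Set.diff_subset)
      (measurableSet_ball.diff hΩm) (Metric.isOpen_ball.sdiff isClosed_closure)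
      (fun y hy => ⟨hy.1, fun h => hy.2 (subset_closure h)⟩) ?_ (by rw [← hB]; exact hBeq) hBpt
    intro y hy
    have hyx : y ≠ x₀ := fun h => hy.2 (h ▸ subset_closure hx₀)
    have ht : (0:ℝ) < ‖x₀ - y‖ := by
      rw [norm_pos_iff, sub_ne_zero]
      exact fun h => hyx h.symm
    have hlt : ‖x₀ - y‖ < r := by rw [hnorm]; exact Metric.mem_ball.mp hy.1
    exact (Real.log_pos ((one_lt_div ht).mpr hlt)).ne'
end
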